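/- Let a, b, c be integers with 0 < |a| < |b| < |c| and |3ab − c| ≥ |c|. Then each of the three triples obtained from (a,b,c) by a single Vieta move, namely (3bc − a, b, c), (a, 3ac − b, c), and (a, b, 3ab − c), has norm at least ‖(a,b,c)‖; that is, (a,b,c) is a base of its graph. -/
import Mathlib


/-- The norm of an integer triple `(a,b,c)` is `|a| + |b| + |c|`. -/
def tripleNorm (a b c : ℤ) : ℤ := |a| + |b| + |c|

/-- If `0 < |a| < |b| < |c|` and `|3ab − c| ≥ |c|`, then each of the three
triples obtained from `(a,b,c)` by a single Vieta move has norm at least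
`‖(a,b,c)‖`; that is, `(a,b,c)` is a base of its graph. -/
theorem base_criterion (a b c : ℤ) (h1 : 0 < |a|) (h2 : |a| < |b|)
    (h3 : |b| < |c|) (h4 : |3 * a * b - c| ≥ |c|) :
    tripleNorm (3 * b * c - a) b c ≥ tripleNorm a b c ∧
    tripleNorm a (3 * a * c - b) c ≥ tripleNorm a b c ∧
    tripleNorm a b (3 * a * b - c) ≥ tripleNorm a b c := by
  have hbc : |3 * b * c| = 3 * (|b| * |c|) := by
    rw [abs_mul, abs_mul]; simp [mul_assoc]
  have hac : |3 * a * c| = 3 * (|a| * |c|) := by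
    rw [abs_mul, abs_mul]; simp [mul_assoc]
  have e1 : |3 * b * c| - |a| ≤ |3 * b * c - a| := abs_sub_abs_le_abs_sub _ _
  have e2 : |3 * a * c| - |b| ≤ |3 * a * c - b| := abs_sub_abs_le_abs_sub _ _
  refine ⟨?_, ?_, ?_⟩ <;> unfold tripleNorm
  · nlinarith [hbc, e1]
  · nlinarith [hac, e2]
  · linarith
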